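/- arXiv:1412.8418 — 2 statements merged into one kernel-verified Lean document; each statement's English description precedes it below -/
import Mathlib

section
/- Let G be a finite group, let p, q, r be pairwise distinct primes, and suppose G has an automorphism α of order exactly p·q·r that has no regular cycle. For each positive integer d, let ζ_d(α) denote the number of elements of G whose cycle length under α is exactly d. Then |G| = 4·ζ₁(α), ζ₁(α) = ζ_{pq}(α) = ζ_{pr}(α) = ζ_{qr}(α), and the fixed-point subgroup fix(α) = {g ∈ G : α(g) = g} is a normal subgroup of G. -/
private lemma mulaut_pow_apply {G : Type*} [Group G] (α : MulAut G) (n : ℕ) (g : G) :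
    (α ^ n) g = (⇑α)^[n] g := by
  induction n generalizing g with
  | zero => simp
  | succ k ih => simp [pow_succ, Function.iterate_succ_apply, ih]

private lemma union_two {G : Type*} [Group G] (H K : Subgroup G)
    (h : ∀ g : G, g ∈ H ∨ g ∈ K) : (∀ g : G, g ∈ H) ∨ (∀ g : G, g ∈ K) := by
  by_contra hc
  push_neg at hc
  obtain ⟨⟨a, ha⟩, b, hb⟩ := hc
  have haK : a ∈ K := (h a).resolve_left ha
  have hbH : b ∈ H := (h b).resolve_right hb
  rcases h (b * a) with h1 | h1
  · exact ha (by simpa using H.mul_mem (H.inv_mem hbH) h1)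
  · exact hb (by simpa using K.mul_mem h1 (K.inv_mem haK))

private lemma exclusive {G : Type*} [Group G] (A B C : Subgroup G)
    (cover : ∀ g : G, g ∈ A ∨ g ∈ B ∨ g ∈ C)
    (notB : ¬∀ g : G, g ∈ B) (notC : ¬∀ g : G, g ∈ C) :
    ∃ a, a ∈ A ∧ a ∉ B ∧ a ∉ C := by
  by_contra h
  push_neg at h
  have hBC : ∀ g : G, g ∈ B ∨ g ∈ C := by
    intro g
    rcases cover g with h1 | h1 | h1
    · by_cases hB : g ∈ B
      · exact Or.inl hB
      · exact Or.inr (h g h1 hB)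
    · exact Or.inl h1
    · exact Or.inr h1
  rcases union_two B C hBC with h' | h'
  · exact notB h'
  · exact notC h'

private lemma scorza_card {G : Type*} [Group G] [Finite G]
    (N A B C : Subgroup G)
    (hNA : N ≤ A) (hNB : N ≤ B)
    (hAB : ∀ g, g ∈ A → g ∈ B → g ∈ N)
    (hAC : ∀ g, g ∈ A → g ∈ C → g ∈ N)
    (cover : ∀ g : G, g ∈ A ∨ g ∈ B ∨ g ∈ C)
    (notA : ¬∀ g : G, g ∈ A) (notB : ¬∀ g : G, g ∈ B) (notC : ¬∀ g : G, g ∈ C) :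
    Nat.card A = 2 * Nat.card N := by
  obtain ⟨a₀, ha₀A, ha₀B, ha₀C⟩ := exclusive A B C cover notB notC
  obtain ⟨b₀, hb₀B, hb₀A, hb₀C⟩ := exclusive B A C
    (fun g => by rcases cover g with h | h | h <;> tauto) notA notC
  have ha₀N : a₀ ∉ N := fun h => ha₀B (hNB h)
  have hmulC : ∀ x, x ∈ A → x ∉ N → x * b₀ ∈ C := by
    intro x hxA hxN
    rcases cover (x * b₀) with h | h | h
    · exact absurd (by simpa using A.mul_mem (A.inv_mem hxA) h) hb₀A
    · exact absurd (hAB x hxA (by simpa using B.mul_mem h (B.inv_mem hb₀B))) hxN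
    · exact h
  have key : ∀ x, x ∈ A → x ∉ N → x * a₀⁻¹ ∈ N := by
    intro x hxA hxN
    have h1 : x * b₀ ∈ C := hmulC x hxA hxN
    have h2 : a₀ * b₀ ∈ C := hmulC a₀ ha₀A ha₀N
    have h3 : x * a₀⁻¹ ∈ C := by
      have := C.mul_mem h1 (C.inv_mem h2)
      simpa [mul_assoc] using this
    exact hAC _ (A.mul_mem hxA (A.inv_mem ha₀A)) h3
  have setEq : (A : Set G) = (N : Set G) ∪ (fun x => x * a₀) '' (N : Set G) := by
    ext g
    constructor
    · intro hg
      by_cases hgN : g ∈ N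
      · exact Or.inl hgN
      · exact Or.inr ⟨g * a₀⁻¹, key g hg hgN, by simp⟩
    · rintro (h | ⟨x, hx, rfl⟩)
      · exact hNA h
      · exact A.mul_mem (hNA hx) ha₀A
  have hdisj : Disjoint (N : Set G) ((fun x => x * a₀) '' (N : Set G)) := by
    rw [Set.disjoint_left]
    rintro x hxN ⟨y, hyN, rfl⟩
    exact ha₀N (by simpa using N.mul_mem (N.inv_mem hyN) hxN)
  have h1 : Nat.card A = ((A : Set G)).ncard := (Nat.card_coe_set_eq _).symm
  have h2 : Nat.card N = ((N : Set G)).ncard := (Nat.card_coe_set_eq _).symm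
  rw [h1, h2, setEq, Set.ncard_union_eq hdisj,
    Set.ncard_image_of_injective _ (mul_left_injective a₀)]
  ring

private lemma dvd_three {p q r d : ℕ} (hp : p.Prime) (hq : q.Prime) (hr : r.Prime)
    (hpq : p ≠ q) (hpr : p ≠ r) (hqr : q ≠ r)
    (hd : d ∣ p * q * r) (hne : d ≠ p * q * r) :
    d ∣ p * q ∨ d ∣ p * r ∨ d ∣ q * r := by
  by_cases hpd : p ∣ d
  · by_cases hqd : q ∣ d
    · by_cases hrd : r ∣ d
      · exfalso
        have hpqd : p * q ∣ d :=
          (Nat.Coprime.mul_dvd_of_dvd_of_dvd ((Nat.coprime_primes hp hq).mpr hpq) hpd hqd)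
        have hco : Nat.Coprime (p * q) r :=
          Nat.Coprime.mul ((Nat.coprime_primes hp hr).mpr hpr)
            ((Nat.coprime_primes hq hr).mpr hqr)
        have : p * q * r ∣ d := hco.mul_dvd_of_dvd_of_dvd hpqd hrd
        exact hne (Nat.dvd_antisymm hd this)
      · left
        have hco : Nat.Coprime d r := ((Nat.Prime.coprime_iff_not_dvd hr).mpr hrd).symm
        exact hco.dvd_of_dvd_mul_right hd
    · right; left
      have hco : Nat.Coprime d q := ((Nat.Prime.coprime_iff_not_dvd hq).mpr hqd).symm
      have hd' : d ∣ p * r * q := by rwa [show p * r * q = p * q * r by ring]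
      exact hco.dvd_of_dvd_mul_right hd'
  · right; right
    have hco : Nat.Coprime d p := ((Nat.Prime.coprime_iff_not_dvd hp).mpr hpd).symm
    have hd' : d ∣ q * r * p := by rwa [show q * r * p = p * q * r by ring]
    exact hco.dvd_of_dvd_mul_right hd'

private lemma normal_of_index_two {G : Type*} [Group G] (H : Subgroup G) (h : H.index = 2) :
    H.Normal := by
  constructor
  intro n hn g
  rw [Subgroup.mul_mem_iff_of_index_two h, Subgroup.mul_mem_iff_of_index_two h]
  simp [hn]

/-- The subgroup of fixed points of an automorphism `α` of a group `G`. -/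
def fixSubgroup {G : Type*} [Group G] (α : MulAut G) : Subgroup G where
  carrier := {g : G | α g = g}
  one_mem' := map_one α
  mul_mem' := by
    intro a b ha hb
    simp only [Set.mem_setOf_eq] at *
    rw [map_mul, ha, hb]
  inv_mem' := by
    intro a ha
    simp only [Set.mem_setOf_eq] at *
    rw [map_inv, ha]

/-- `zeta α d` is the number of elements of `G` whose cycle length under `α` is exactly `d`. -/
noncomputable def zeta {G : Type*} [Group G] (α : MulAut G) (d : ℕ) : ℕ :=
  Nat.card {g : G // Function.minimalPeriod (⇑α) g = d}

set_option maxHeartbeats 2000000 in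
/-- If a finite group `G` has an automorphism `α` of order `p·q·r` (for pairwise distinct
primes `p, q, r`) without a regular cycle, then `|G| = 4·ζ₁(α)`,
`ζ₁(α) = ζ_{pq}(α) = ζ_{pr}(α) = ζ_{qr}(α)`, and the fixed-point subgroup of `α` is normal. -/
theorem stmt15 {G : Type*} [Group G] [Fintype G]
    (p q r : ℕ) (hp : p.Prime) (hq : q.Prime) (hr : r.Prime)
    (hpq : p ≠ q) (hpr : p ≠ r) (hqr : q ≠ r)
    (α : MulAut G) (hord : orderOf α = p * q * r)
    (hnoreg : ∀ g : G, Function.minimalPeriod (⇑α) g ≠ orderOf α) :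
    Fintype.card G = 4 * zeta α 1 ∧
    zeta α 1 = zeta α (p * q) ∧
    zeta α 1 = zeta α (p * r) ∧
    zeta α 1 = zeta α (q * r) ∧
    (fixSubgroup α).Normal := by
  set N : Subgroup G := fixSubgroup α with hNdef
  set A : Subgroup G := fixSubgroup (α ^ (p * q)) with hAdef
  set B : Subgroup G := fixSubgroup (α ^ (p * r)) with hBdef
  set C : Subgroup G := fixSubgroup (α ^ (q * r)) with hCdef
  -- membership characterizations
  have hmem : ∀ (n : ℕ) (g : G),
      g ∈ fixSubgroup (α ^ n) ↔ Function.minimalPeriod (⇑α) g ∣ n := by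
    intro n g
    show (α ^ n) g = g ↔ _
    rw [mulaut_pow_apply]
    exact Function.isPeriodicPt_iff_minimalPeriod_dvd
  have hmemN : ∀ g : G, g ∈ N ↔ Function.minimalPeriod (⇑α) g = 1 := fun g =>
    (Function.minimalPeriod_eq_one_iff_isFixedPt).symm
  -- every minimal period divides p*q*r
  have hdvd : ∀ g : G, Function.minimalPeriod (⇑α) g ∣ p * q * r := by
    intro g
    have h1 : (α ^ (p * q * r)) g = g := by
      rw [← hord, pow_orderOf_eq_one]; rfl
    rw [mulaut_pow_apply] at h1
    exact Function.IsPeriodicPt.minimalPeriod_dvd h1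
  have hne : ∀ g : G, Function.minimalPeriod (⇑α) g ≠ p * q * r := by
    intro g; have := hnoreg g; rwa [hord] at this
  -- covering
  have cover : ∀ g : G, g ∈ A ∨ g ∈ B ∨ g ∈ C := by
    intro g
    rcases dvd_three hp hq hr hpq hpr hqr (hdvd g) (hne g) with h | h | h
    · exact Or.inl ((hmem _ g).mpr h)
    · exact Or.inr (Or.inl ((hmem _ g).mpr h))
    · exact Or.inr (Or.inr ((hmem _ g).mpr h))
  -- properness
  have hprop : ∀ n : ℕ, Nat.card G ∣ 0 → True := fun _ _ => trivial
  have notfix : ∀ n : ℕ, (p * q * r ∣ n → False) → ¬∀ g : G, g ∈ fixSubgroup (α ^ n) := by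
    intro n hn h
    apply hn
    rw [← hord]
    apply orderOf_dvd_of_pow_eq_one
    ext g
    exact (h g : (α ^ n) g = g)
  have notA : ¬∀ g : G, g ∈ A := by
    apply notfix
    intro h
    have h0 : 0 < p * q := Nat.mul_pos hp.pos hq.pos
    have := Nat.le_of_dvd h0 h
    nlinarith [hr.two_le, hp.pos, hq.pos]
  have notB : ¬∀ g : G, g ∈ B := by
    apply notfix
    intro h
    have h0 : 0 < p * r := Nat.mul_pos hp.pos hr.pos
    have := Nat.le_of_dvd h0 h
    nlinarith [hq.two_le, hp.pos, hr.pos]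
  have notC : ¬∀ g : G, g ∈ C := by
    apply notfix
    intro h
    have h0 : 0 < q * r := Nat.mul_pos hq.pos hr.pos
    have := Nat.le_of_dvd h0 h
    nlinarith [hp.two_le, hq.pos, hr.pos]
  -- exclusive elements
  obtain ⟨a₀, ha₀A, ha₀B, ha₀C⟩ := exclusive A B C cover notB notC
  obtain ⟨b₀, hb₀B, hb₀A, hb₀C⟩ := exclusive B A C
    (fun g => by rcases cover g with h | h | h <;> tauto) notA notC
  obtain ⟨c₀, hc₀C, hc₀A, hc₀B⟩ := exclusive C A B
    (fun g => by rcases cover g with h | h | h <;> tauto) notA notB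
  -- generic Scorza step: x in two of the subgroups, exclusive elt of third forces x in third
  have step : ∀ (X : Subgroup G) (x y : G), x ∈ X → (x * y ∈ X → y ∈ X) := by
    intro X x y hx h
    simpa using X.mul_mem (X.inv_mem hx) h
  have step' : ∀ (X : Subgroup G) (x y : G), y ∈ X → (x * y ∈ X → x ∈ X) := by
    intro X x y hy h
    simpa using X.mul_mem h (X.inv_mem hy)
  -- pairwise intersections are N
  have coprimeQR : Nat.gcd q r = 1 := (Nat.coprime_primes hq hr).mpr hqr
  have coprimePR : Nat.gcd p r = 1 := (Nat.coprime_primes hp hr).mpr hpr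
  have coprimePQ : Nat.gcd p q = 1 := (Nat.coprime_primes hp hq).mpr hpq
  have hAB : ∀ g, g ∈ A → g ∈ B → g ∈ N := by
    intro g hgA hgB
    have hgC : g ∈ C := by
      by_contra hgC
      rcases cover (g * c₀) with h | h | h
      · exact hc₀A (step A g c₀ hgA h)
      · exact hc₀B (step B g c₀ hgB h)
      · exact hgC (step' C g c₀ hc₀C h)
    have h1 : Function.minimalPeriod (⇑α) g ∣ p :=
      by
        have := Nat.dvd_gcd ((hmem _ g).mp hgA) ((hmem _ g).mp hgB)
        rwa [Nat.gcd_mul_left, coprimeQR, mul_one] at this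
    have h2 : Function.minimalPeriod (⇑α) g ∣ q * r := (hmem _ g).mp hgC
    have h3 : Function.minimalPeriod (⇑α) g ∣ 1 := by
      have := Nat.dvd_gcd h1 h2
      rwa [Nat.Coprime.gcd_eq_one (Nat.Coprime.mul_right
        ((Nat.coprime_primes hp hq).mpr hpq) ((Nat.coprime_primes hp hr).mpr hpr))] at this
    exact (hmemN g).mpr (Nat.dvd_one.mp h3)
  have hAC : ∀ g, g ∈ A → g ∈ C → g ∈ N := by
    intro g hgA hgC
    have hgB : g ∈ B := by
      by_contra hgB
      rcases cover (g * b₀) with h | h | h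
      · exact hb₀A (step A g b₀ hgA h)
      · exact hgB (step' B g b₀ hb₀B h)
      · exact hb₀C (step C g b₀ hgC h)
    have h1 : Function.minimalPeriod (⇑α) g ∣ q := by
      have := Nat.dvd_gcd ((hmem _ g).mp hgA) ((hmem _ g).mp hgC)
      rwa [show p * q = q * p from mul_comm p q, Nat.gcd_mul_left, coprimePR, mul_one] at this
    have h2 : Function.minimalPeriod (⇑α) g ∣ p * r := (hmem _ g).mp hgB
    have h3 : Function.minimalPeriod (⇑α) g ∣ 1 := by
      have := Nat.dvd_gcd h1 h2
      rwa [Nat.Coprime.gcd_eq_one (Nat.Coprime.mul_right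
        ((Nat.coprime_primes hq hp).mpr (Ne.symm hpq))
        ((Nat.coprime_primes hq hr).mpr hqr))] at this
    exact (hmemN g).mpr (Nat.dvd_one.mp h3)
  have hBC : ∀ g, g ∈ B → g ∈ C → g ∈ N := by
    intro g hgB hgC
    have hgA : g ∈ A := by
      by_contra hgA
      rcases cover (g * a₀) with h | h | h
      · exact hgA (step' A g a₀ ha₀A h)
      · exact ha₀B (step B g a₀ hgB h)
      · exact ha₀C (step C g a₀ hgC h)
    have h1 : Function.minimalPeriod (⇑α) g ∣ r := by
      have := Nat.dvd_gcd ((hmem _ g).mp hgB) ((hmem _ g).mp hgC)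
      rwa [Nat.gcd_mul_right, coprimePQ, one_mul] at this
    have h2 : Function.minimalPeriod (⇑α) g ∣ p * q := (hmem _ g).mp hgA
    have h3 : Function.minimalPeriod (⇑α) g ∣ 1 := by
      have := Nat.dvd_gcd h1 h2
      rwa [Nat.Coprime.gcd_eq_one (Nat.Coprime.mul_right
        ((Nat.coprime_primes hr hp).mpr (Ne.symm hpr))
        ((Nat.coprime_primes hr hq).mpr (Ne.symm hqr)))] at this
    exact (hmemN g).mpr (Nat.dvd_one.mp h3)
  have hNA : N ≤ A := fun g hg => (hmem _ g).mpr (by rw [(hmemN g).mp hg]; exact one_dvd _)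
  have hNB : N ≤ B := fun g hg => (hmem _ g).mpr (by rw [(hmemN g).mp hg]; exact one_dvd _)
  have hNC : N ≤ C := fun g hg => (hmem _ g).mpr (by rw [(hmemN g).mp hg]; exact one_dvd _)
  -- cardinalities via Scorza
  have hcardA : Nat.card A = 2 * Nat.card N :=
    scorza_card N A B C hNA hNB hAB hAC cover notA notB notC
  have hcardB : Nat.card B = 2 * Nat.card N :=
    scorza_card N B A C hNB hNA (fun g h1 h2 => hAB g h2 h1) hBC
      (fun g => by rcases cover g with h | h | h <;> tauto) notB notA notC
  have hcardC : Nat.card C = 2 * Nat.card N :=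
    scorza_card N C A B hNC hNA (fun g h1 h2 => hAC g h2 h1) (fun g h1 h2 => hBC g h2 h1)
      (fun g => by rcases cover g with h | h | h <;> tauto) notC notA notB
  -- membership iff exact period statements
  have hAiff : ∀ g : G, g ∈ A ↔
      (Function.minimalPeriod (⇑α) g = 1 ∨ Function.minimalPeriod (⇑α) g = p * q) := by
    intro g
    rw [hmem]
    constructor
    · intro hd
      by_cases hpd : p ∣ Function.minimalPeriod (⇑α) g
      · by_cases hqd : q ∣ Function.minimalPeriod (⇑α) g
        · right
          exact Nat.dvd_antisymm hd
            (((Nat.coprime_primes hp hq).mpr hpq).mul_dvd_of_dvd_of_dvd hpd hqd)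
        · -- q ∤ d so d ∣ p, hence g ∈ A ∩ B hence g ∈ N
          left
          have hco : Nat.Coprime (Function.minimalPeriod (⇑α) g) q :=
            ((Nat.Prime.coprime_iff_not_dvd hq).mpr hqd).symm
          have hdp : Function.minimalPeriod (⇑α) g ∣ p := hco.dvd_of_dvd_mul_right hd
          have hgB : g ∈ B := (hmem _ g).mpr (hdp.trans (Dvd.intro r rfl))
          have hgA : g ∈ A := (hmem _ g).mpr hd
          exact (hmemN g).mp (hAB g hgA hgB)
      · -- p ∤ d so d ∣ q, g ∈ A ∩ C hence g ∈ N
        left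
        have hco : Nat.Coprime (Function.minimalPeriod (⇑α) g) p :=
          ((Nat.Prime.coprime_iff_not_dvd hp).mpr hpd).symm
        have hdq : Function.minimalPeriod (⇑α) g ∣ q := by
          have hd' : Function.minimalPeriod (⇑α) g ∣ q * p := by
            rwa [mul_comm q p]
          exact hco.dvd_of_dvd_mul_right hd'
        have hgC : g ∈ C := (hmem _ g).mpr (hdq.trans (Dvd.intro r rfl))
        have hgA : g ∈ A := (hmem _ g).mpr hd
        exact (hmemN g).mp (hAC g hgA hgC)
    · rintro (h | h) <;> rw [h]
      exact one_dvd _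
  have hBiff : ∀ g : G, g ∈ B ↔
      (Function.minimalPeriod (⇑α) g = 1 ∨ Function.minimalPeriod (⇑α) g = p * r) := by
    intro g
    rw [hmem]
    constructor
    · intro hd
      by_cases hpd : p ∣ Function.minimalPeriod (⇑α) g
      · by_cases hrd : r ∣ Function.minimalPeriod (⇑α) g
        · right
          exact Nat.dvd_antisymm hd
            (((Nat.coprime_primes hp hr).mpr hpr).mul_dvd_of_dvd_of_dvd hpd hrd)
        · left
          have hco : Nat.Coprime (Function.minimalPeriod (⇑α) g) r :=
            ((Nat.Prime.coprime_iff_not_dvd hr).mpr hrd).symm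
          have hdp : Function.minimalPeriod (⇑α) g ∣ p := hco.dvd_of_dvd_mul_right hd
          have hgA : g ∈ A := (hmem _ g).mpr (hdp.trans (Dvd.intro q rfl))
          have hgB : g ∈ B := (hmem _ g).mpr hd
          exact (hmemN g).mp (hAB g hgA hgB)
      · left
        have hco : Nat.Coprime (Function.minimalPeriod (⇑α) g) p :=
          ((Nat.Prime.coprime_iff_not_dvd hp).mpr hpd).symm
        have hdr : Function.minimalPeriod (⇑α) g ∣ r := by
          have hd' : Function.minimalPeriod (⇑α) g ∣ r * p := by
            rwa [mul_comm r p]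
          exact hco.dvd_of_dvd_mul_right hd'
        have hgC : g ∈ C := (hmem _ g).mpr (hdr.trans (Dvd.intro_left q rfl))
        have hgB : g ∈ B := (hmem _ g).mpr hd
        exact (hmemN g).mp (hBC g hgB hgC)
    · rintro (h | h) <;> rw [h]
      exact one_dvd _
  have hCiff : ∀ g : G, g ∈ C ↔
      (Function.minimalPeriod (⇑α) g = 1 ∨ Function.minimalPeriod (⇑α) g = q * r) := by
    intro g
    rw [hmem]
    constructor
    · intro hd
      by_cases hqd : q ∣ Function.minimalPeriod (⇑α) g
      · by_cases hrd : r ∣ Function.minimalPeriod (⇑α) g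
        · right
          exact Nat.dvd_antisymm hd
            (((Nat.coprime_primes hq hr).mpr hqr).mul_dvd_of_dvd_of_dvd hqd hrd)
        · left
          have hco : Nat.Coprime (Function.minimalPeriod (⇑α) g) r :=
            ((Nat.Prime.coprime_iff_not_dvd hr).mpr hrd).symm
          have hdq : Function.minimalPeriod (⇑α) g ∣ q := hco.dvd_of_dvd_mul_right hd
          have hgA : g ∈ A := (hmem _ g).mpr (hdq.trans (Dvd.intro_left p rfl))
          have hgC : g ∈ C := (hmem _ g).mpr hd
          exact (hmemN g).mp (hAC g hgA hgC)
      · left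
        have hco : Nat.Coprime (Function.minimalPeriod (⇑α) g) q :=
          ((Nat.Prime.coprime_iff_not_dvd hq).mpr hqd).symm
        have hdr : Function.minimalPeriod (⇑α) g ∣ r := by
          have hd' : Function.minimalPeriod (⇑α) g ∣ r * q := by
            rwa [mul_comm r q]
          exact hco.dvd_of_dvd_mul_right hd'
        have hgB : g ∈ B := (hmem _ g).mpr (hdr.trans (Dvd.intro_left p rfl))
        have hgC : g ∈ C := (hmem _ g).mpr hd
        exact (hmemN g).mp (hBC g hgB hgC)
    · rintro (h | h) <;> rw [h]
      exact one_dvd _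
  -- zeta as ncard
  have hzeta : ∀ d : ℕ, zeta α d = ({g : G | Function.minimalPeriod (⇑α) g = d}).ncard := by
    intro d
    rw [zeta, ← Nat.card_coe_set_eq]
    rfl
  have hz1 : zeta α 1 = Nat.card N := by
    rw [zeta]
    exact Nat.card_congr (Equiv.subtypeEquivRight fun g => (hmemN g).symm)
  -- the Z sets
  set Z : ℕ → Set G := fun d => {g : G | Function.minimalPeriod (⇑α) g = d} with hZdef
  have hdisjZ : ∀ a b : ℕ, a ≠ b → Disjoint (Z a) (Z b) := by
    intro a b hab
    rw [Set.disjoint_left]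
    intro g hga hgb
    exact hab (hga.symm.trans hgb)
  -- numeric inequalities
  have h1pq : (1 : ℕ) ≠ p * q := by nlinarith [hp.two_le, hq.two_le]
  have h1pr : (1 : ℕ) ≠ p * r := by nlinarith [hp.two_le, hr.two_le]
  have h1qr : (1 : ℕ) ≠ q * r := by nlinarith [hq.two_le, hr.two_le]
  have hpqpr : p * q ≠ p * r := fun h => hqr (Nat.eq_of_mul_eq_mul_left hp.pos h)
  have hpqqr : p * q ≠ q * r := fun h => hpr (Nat.eq_of_mul_eq_mul_left hq.pos
    (by rw [mul_comm q p]; exact h))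
  have hprqr : p * r ≠ q * r := fun h => hpq (Nat.eq_of_mul_eq_mul_right hr.pos h)
  -- subgroup carriers split as unions of Z's
  have hcarA : (A : Set G) = Z 1 ∪ Z (p * q) := by
    ext g; simpa [hZdef] using hAiff g
  have hcarB : (B : Set G) = Z 1 ∪ Z (p * r) := by
    ext g; simpa [hZdef] using hBiff g
  have hcarC : (C : Set G) = Z 1 ∪ Z (q * r) := by
    ext g; simpa [hZdef] using hCiff g
  have hcardA' : Nat.card A = zeta α 1 + zeta α (p * q) := by
    rw [show Nat.card A = ((A : Set G)).ncard from (Nat.card_coe_set_eq _).symm,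
      hcarA, Set.ncard_union_eq (hdisjZ _ _ h1pq), hzeta, hzeta]
  have hcardB' : Nat.card B = zeta α 1 + zeta α (p * r) := by
    rw [show Nat.card B = ((B : Set G)).ncard from (Nat.card_coe_set_eq _).symm,
      hcarB, Set.ncard_union_eq (hdisjZ _ _ h1pr), hzeta, hzeta]
  have hcardC' : Nat.card C = zeta α 1 + zeta α (q * r) := by
    rw [show Nat.card C = ((C : Set G)).ncard from (Nat.card_coe_set_eq _).symm,
      hcarC, Set.ncard_union_eq (hdisjZ _ _ h1qr), hzeta, hzeta]
  have hzpq : zeta α 1 = zeta α (p * q) := by omega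
  have hzpr : zeta α 1 = zeta α (p * r) := by omega
  have hzqr : zeta α 1 = zeta α (q * r) := by omega
  -- partition of the whole group
  have huniv : (Set.univ : Set G) =
      {g : G | Function.minimalPeriod (⇑α) g = 1} ∪
        ({g : G | Function.minimalPeriod (⇑α) g = p * q} ∪
          ({g : G | Function.minimalPeriod (⇑α) g = p * r} ∪
            {g : G | Function.minimalPeriod (⇑α) g = q * r})) := by
    ext g
    simp only [Set.mem_univ, true_iff, Set.mem_union, Set.mem_setOf_eq]
    rcases cover g with h | h | h
    · rcases (hAiff g).mp h with h' | h' <;> tauto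
    · rcases (hBiff g).mp h with h' | h' <;> tauto
    · rcases (hCiff g).mp h with h' | h' <;> tauto
  have hG : Nat.card G = zeta α 1 + (zeta α (p * q) + (zeta α (p * r) + zeta α (q * r))) := by
    rw [← Set.ncard_univ, huniv,
      Set.ncard_union_eq (Set.disjoint_union_right.mpr
        ⟨hdisjZ _ _ h1pq, Set.disjoint_union_right.mpr ⟨hdisjZ _ _ h1pr, hdisjZ _ _ h1qr⟩⟩),
      Set.ncard_union_eq (Set.disjoint_union_right.mpr ⟨hdisjZ _ _ hpqpr, hdisjZ _ _ hpqqr⟩),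
      Set.ncard_union_eq (hdisjZ _ _ hprqr), hzeta, hzeta, hzeta, hzeta]
  have hG4 : Nat.card G = 4 * Nat.card N := by omega
  have hposN : 0 < Nat.card N := Nat.card_pos
  -- indices
  have hidxA : A.index = 2 := by
    have h := Subgroup.index_mul_card (H := A)
    rw [hcardA, hG4] at h
    have h' : A.index * (2 * Nat.card N) = 2 * (2 * Nat.card N) := by omega
    exact Nat.eq_of_mul_eq_mul_right (Nat.mul_pos (by norm_num) hposN) h'
  have hidxB : B.index = 2 := by
    have h := Subgroup.index_mul_card (H := B)
    rw [hcardB, hG4] at h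
    have h' : B.index * (2 * Nat.card N) = 2 * (2 * Nat.card N) := by omega
    exact Nat.eq_of_mul_eq_mul_right (Nat.mul_pos (by norm_num) hposN) h'
  have hnA : A.Normal := normal_of_index_two A hidxA
  have hnB : B.Normal := normal_of_index_two B hidxB
  have hnN : N.Normal :=
    ⟨fun n hn g => hAB _ (hnA.conj_mem n (hNA hn) g) (hnB.conj_mem n (hNB hn) g)⟩
  refine ⟨?_, hzpq, hzpr, hzqr, hnN⟩
  rw [← Nat.card_eq_fintype_card]
  omega
end

section
/- Every finite group is a direct factor of some finite non-RCC group: for every finite group G there exists a finite group K such that the direct product K × G admits an automorphism without a regular cycle. In particular, every finite group embeds into a finite non-RCC group. -/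
namespace Stmt18Aux

/-- The action unit: `(x,y)` acts on `ZMod 30` by multiplication by `(-1)^x * 19^y`. -/
def u (h : ZMod 2 × ZMod 2) : ZMod 30 := (-1) ^ h.1.val * 19 ^ h.2.val

lemma u_sq : ∀ h : ZMod 2 × ZMod 2, u h * u h = 1 := by decide

lemma u_add : ∀ a b : ZMod 2 × ZMod 2, u (a + b) = u a * u b := by decide

/-- The automorphism of `Multiplicative (ZMod 30)` given by multiplication by `u h`. -/
def phiAux (h : ZMod 2 × ZMod 2) :
    Multiplicative (ZMod 30) ≃* Multiplicative (ZMod 30) where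
  toFun n := Multiplicative.ofAdd (u h * n.toAdd)
  invFun n := Multiplicative.ofAdd (u h * n.toAdd)
  left_inv n := by
    simp only [toAdd_ofAdd, ← mul_assoc, u_sq, one_mul, ofAdd_toAdd]
  right_inv n := by
    simp only [toAdd_ofAdd, ← mul_assoc, u_sq, one_mul, ofAdd_toAdd]
  map_mul' a b := by
    simp only [toAdd_mul, mul_add, ofAdd_add]

/-- The action homomorphism `V₄ →* Aut(C₃₀)`. -/
def φ : Multiplicative (ZMod 2 × ZMod 2) →* MulAut (Multiplicative (ZMod 30)) where
  toFun h := phiAux h.toAdd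
  map_one' := by
    ext n
    show Multiplicative.ofAdd (u (0, 0) * n.toAdd) = n
    have h1 : u ((0 : ZMod 2), (0 : ZMod 2)) = 1 := by decide
    show Multiplicative.ofAdd (u ((0:ZMod 2),(0:ZMod 2)) * Multiplicative.toAdd n) = n
    rw [h1, one_mul, ofAdd_toAdd]
  map_mul' a b := by
    ext n
    show Multiplicative.ofAdd (u (a.toAdd + b.toAdd) * n.toAdd) = _
    show _ = Multiplicative.ofAdd (u a.toAdd * (Multiplicative.ofAdd (u b.toAdd * n.toAdd)).toAdd)
    simp [u_add, mul_assoc]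

/-- The concrete non-RCC group of order 120: `C₃₀ ⋊ V₄`. -/
abbrev K : Type := Multiplicative (ZMod 30) ⋊[φ] Multiplicative (ZMod 2 × ZMod 2)

instance : Fintype K :=
  Fintype.ofEquiv (Multiplicative (ZMod 30) × Multiplicative (ZMod 2 × ZMod 2))
    { toFun := fun p => ⟨p.1, p.2⟩
      invFun := fun k => (k.left, k.right)
      left_inv := fun _ => rfl
      right_inv := fun _ => rfl }

/-- The "derivation" defining the automorphism `β`. -/
def d (h : ZMod 2 × ZMod 2) : ZMod 30 :=
  if h = (0, 0) then 0 else if h = (1, 0) then 14 else if h = (0, 1) then 9 else 5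

lemma d_cocycle : ∀ a b : ZMod 2 × ZMod 2, d (a + b) = d a + u a * d b := by decide

/-- The order-30 automorphism of `K` without a regular cycle. -/
def β : K ≃* K where
  toFun k := ⟨k.left * Multiplicative.ofAdd (d k.right.toAdd), k.right⟩
  invFun k := ⟨k.left * Multiplicative.ofAdd (-d k.right.toAdd), k.right⟩
  left_inv k := by
    ext : 1
    · show k.left * Multiplicative.ofAdd (d k.right.toAdd) *
        Multiplicative.ofAdd (-d k.right.toAdd) = k.left
      rw [mul_assoc, ← ofAdd_add, add_neg_cancel, ofAdd_zero, mul_one]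
    · rfl
  right_inv k := by
    ext : 1
    · show k.left * Multiplicative.ofAdd (-d k.right.toAdd) *
        Multiplicative.ofAdd (d k.right.toAdd) = k.left
      rw [mul_assoc, ← ofAdd_add, neg_add_cancel, ofAdd_zero, mul_one]
    · rfl
  map_mul' a b := by
    ext : 1
    · show (a * b).left * Multiplicative.ofAdd (d (a * b).right.toAdd) = _
      have hphi : ∀ (h : Multiplicative (ZMod 2 × ZMod 2)) (x : Multiplicative (ZMod 30)),
          φ h x = Multiplicative.ofAdd (u h.toAdd * x.toAdd) := fun _ _ => rfl
      apply Multiplicative.toAdd.injective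
      show (a.left * φ a.right b.left).toAdd + d ((a.right * b.right).toAdd) = _
      show _ = ((a.left * Multiplicative.ofAdd (d a.right.toAdd)) *
          φ a.right (b.left * Multiplicative.ofAdd (d b.right.toAdd))).toAdd
      rw [hphi, hphi]
      simp only [toAdd_mul, toAdd_ofAdd, d_cocycle]
      ring
    · rfl

lemma beta_iterate (k : ℕ) (x : K) :
    (⇑β)^[k] x = ⟨x.left * Multiplicative.ofAdd (k • d x.right.toAdd), x.right⟩ := by
  induction k with
  | zero => ext <;> simp
  | succ n ih =>
      rw [Function.iterate_succ_apply', ih]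
      show (⟨_ * Multiplicative.ofAdd (d _), _⟩ : K) = _
      ext : 1
      · show x.left * Multiplicative.ofAdd (n • d x.right.toAdd) *
          Multiplicative.ofAdd (d x.right.toAdd) = _
        rw [mul_assoc, ← ofAdd_add, succ_nsmul]
      · rfl

lemma d_cover : ∀ h : ZMod 2 × ZMod 2,
    (15 : ℕ) • d h = 0 ∨ (10 : ℕ) • d h = 0 ∨ (6 : ℕ) • d h = 0 := by decide

lemma beta_no_regular (x : K) :
    (⇑β)^[15] x = x ∨ (⇑β)^[10] x = x ∨ (⇑β)^[6] x = x := by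
  rcases d_cover x.right.toAdd with h | h | h
  · left; rw [beta_iterate, h]; ext <;> simp
  · right; left; rw [beta_iterate, h]; ext <;> simp
  · right; right; rw [beta_iterate, h]; ext <;> simp

lemma beta_thirty (x : K) : (⇑β)^[30] x = x := by
  have h : (30 : ℕ) • d x.right.toAdd = 0 := by
    revert x; intro x; generalize x.right.toAdd = h; revert h; decide
  rw [beta_iterate, h]; ext <;> simp

def t0 : K := ⟨1, Multiplicative.ofAdd (1, 0)⟩
def s0 : K := ⟨1, Multiplicative.ofAdd (0, 1)⟩

lemma beta15_ne : (⇑β)^[15] s0 ≠ s0 := by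
  rw [beta_iterate]
  intro hc
  have := congrArg SemidirectProduct.left hc
  revert this
  show ¬ (1 * Multiplicative.ofAdd ((15 : ℕ) • d (Multiplicative.ofAdd ((0 : ZMod 2), (1 : ZMod 2))).toAdd) = (1 : Multiplicative (ZMod 30)))
  decide

lemma beta10_ne : (⇑β)^[10] t0 ≠ t0 := by
  rw [beta_iterate]
  intro hc
  have := congrArg SemidirectProduct.left hc
  revert this
  show ¬ (1 * Multiplicative.ofAdd ((10 : ℕ) • d (Multiplicative.ofAdd ((1 : ZMod 2), (0 : ZMod 2))).toAdd) = (1 : Multiplicative (ZMod 30)))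
  decide

lemma beta6_ne : (⇑β)^[6] t0 ≠ t0 := by
  rw [beta_iterate]
  intro hc
  have := congrArg SemidirectProduct.left hc
  revert this
  show ¬ (1 * Multiplicative.ofAdd ((6 : ℕ) • d (Multiplicative.ofAdd ((1 : ZMod 2), (0 : ZMod 2))).toAdd) = (1 : Multiplicative (ZMod 30)))
  decide

lemma mulaut_pow_apply {X : Type*} [Group X] (γ : MulAut X) (k : ℕ) (x : X) :
    (γ ^ k) x = (⇑γ)^[k] x := by
  induction k with
  | zero => simp
  | succ n ih =>
      rw [pow_succ', Function.iterate_succ_apply', ← ih]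
      rfl

lemma div_determination : ∀ d < 31, d ∣ 30 → ¬ d ∣ 15 → ¬ d ∣ 10 → ¬ d ∣ 6 → d = 30 := by
  decide

end Stmt18Aux

/-- Every finite group `G` is a direct factor of some finite non-RCC group: there is a finite
group `K` such that `K × G` has an automorphism without a regular cycle. In particular, `G`
embeds into a finite non-RCC group. -/
theorem stmt18 (G : Type*) [Group G] [Fintype G] :
    ∃ (K : Type) (_ : Group K) (_ : Fintype K),
      (∃ α : MulAut (K × G), ∀ x : K × G, Function.minimalPeriod (⇑α) x ≠ orderOf α) ∧
      ∃ f : G →* K × G, Function.Injective f := by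
  classical
  refine ⟨Stmt18Aux.K, inferInstance, inferInstance, ?_,
    MonoidHom.inr Stmt18Aux.K G, fun a b h => by simpa using congrArg Prod.snd h⟩
  let α : MulAut (Stmt18Aux.K × G) := Stmt18Aux.β.prodCongr (MulEquiv.refl G)
  refine ⟨α, ?_⟩
  have hα : ∀ p : Stmt18Aux.K × G, α p = (Stmt18Aux.β p.1, p.2) := fun p => rfl
  have hiter : ∀ (k : ℕ) (p : Stmt18Aux.K × G),
      (⇑α)^[k] p = ((⇑Stmt18Aux.β)^[k] p.1, p.2) := by
    intro k
    induction k with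
    | zero => intro p; rfl
    | succ n ih =>
        intro p
        rw [Function.iterate_succ_apply, Function.iterate_succ_apply, hα]
        exact ih _
  have hpowiter : ∀ (k : ℕ) (p : Stmt18Aux.K × G),
      (α ^ k) p = ((⇑Stmt18Aux.β)^[k] p.1, p.2) := by
    intro k p
    rw [Stmt18Aux.mulaut_pow_apply, hiter]
  have h30 : α ^ 30 = 1 := by
    apply MulEquiv.ext
    intro p
    rw [hpowiter, Stmt18Aux.beta_thirty]
    rfl
  have hnd : ∀ (k : ℕ) (y : Stmt18Aux.K), (⇑Stmt18Aux.β)^[k] y ≠ y →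
      ¬ orderOf α ∣ k := by
    intro k y hy hdvd
    have hk : α ^ k = 1 := orderOf_dvd_iff_pow_eq_one.mp hdvd
    have := congrArg (fun f : MulAut (Stmt18Aux.K × G) => f (y, (1 : G))) hk
    simp only [hpowiter] at this
    exact hy (congrArg Prod.fst this)
  have horder : orderOf α = 30 := by
    have hd30 : orderOf α ∣ 30 := orderOf_dvd_of_pow_eq_one h30
    exact Stmt18Aux.div_determination _
      (Nat.lt_succ_of_le (Nat.le_of_dvd (by norm_num) hd30)) hd30
      (hnd 15 _ Stmt18Aux.beta15_ne) (hnd 10 _ Stmt18Aux.beta10_ne)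
      (hnd 6 _ Stmt18Aux.beta6_ne)
  intro x heq
  rw [horder] at heq
  have hper : ∀ k : ℕ, (⇑Stmt18Aux.β)^[k] x.1 = x.1 → Function.IsPeriodicPt (⇑α) k x := by
    intro k hk
    show (⇑α)^[k] x = x
    rw [hiter, hk]
  rcases Stmt18Aux.beta_no_regular x.1 with h | h | h
  · have := (hper 15 h).minimalPeriod_dvd
    rw [heq] at this
    norm_num at this
  · have := (hper 10 h).minimalPeriod_dvd
    rw [heq] at this
    norm_num at this
  · have := (hper 6 h).minimalPeriod_dvd
    rw [heq] at this
    norm_num at this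
end
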